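/- Let F be a field of characteristic zero containing an element i with i² = −1. Then for every x ∈ F** := F \ {0,1}, one has 3·({x} + {1−x}) = 0 in the pre-Bloch group P(F). -/
import Mathlib


/-- The five-term (pentagon) relations inside the free abelian group on
`F** = F \ {0,1}`: for `x ≠ y` in `F**`, the element
`{x} - {y} + {y/x} + {(1-x)/(1-y)} - {y(1-x)/(x(1-y))}`. -/
def fiveTermSet (F : Type*) [Field F] :
    Set (FreeAbelianGroup {z : F // z ≠ 0 ∧ z ≠ 1}) :=
  { r | ∃ (x y : F) (hx : x ≠ 0 ∧ x ≠ 1) (hy : y ≠ 0 ∧ y ≠ 1) (_ : x ≠ y)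
      (h1 : y / x ≠ 0 ∧ y / x ≠ 1)
      (h2 : (1 - x) / (1 - y) ≠ 0 ∧ (1 - x) / (1 - y) ≠ 1)
      (h3 : y * (1 - x) / (x * (1 - y)) ≠ 0 ∧ y * (1 - x) / (x * (1 - y)) ≠ 1),
      r = FreeAbelianGroup.of ⟨x, hx⟩ - FreeAbelianGroup.of ⟨y, hy⟩
          + FreeAbelianGroup.of ⟨y / x, h1⟩
          + FreeAbelianGroup.of ⟨(1 - x) / (1 - y), h2⟩
          - FreeAbelianGroup.of ⟨y * (1 - x) / (x * (1 - y)), h3⟩ }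

/-- The pre-Bloch group (scissors congruence group) `P(F)`: the quotient of the
free abelian group on `F** = F \ {0,1}` by the subgroup generated by the
five-term relations. -/
abbrev PreBloch (F : Type*) [Field F] :=
  FreeAbelianGroup {z : F // z ≠ 0 ∧ z ≠ 1} ⧸ AddSubgroup.closure (fiveTermSet F)

/-- The class `{z} ∈ P(F)` of a generator `z ∈ F**`. -/
def br {F : Type*} [Field F] (z : F) (h0 : z ≠ 0) (h1 : z ≠ 1) : PreBloch F :=
  QuotientAddGroup.mk (FreeAbelianGroup.of ⟨z, h0, h1⟩)


open Classical in
noncomputable def br' {F : Type*} [Field F] (z : F) : PreBloch F :=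
  if h : z ≠ 0 ∧ z ≠ 1 then br z h.1 h.2 else 0

lemma br'_eq {F : Type*} [Field F] {z : F} (h0 : z ≠ 0) (h1 : z ≠ 1) :
    br' z = br z h0 h1 := dif_pos ⟨h0, h1⟩

lemma rel' {F : Type*} [Field F] (x y : F) (hx0 : x ≠ 0) (hx1 : x ≠ 1)
    (hy0 : y ≠ 0) (hy1 : y ≠ 1) (hxy : x ≠ y) :
    br' x - br' y + br' (y / x) + br' ((1 - x) / (1 - y))
      - br' (y * (1 - x) / (x * (1 - y))) = 0 := by
  have hx1' : (1 : F) - x ≠ 0 := sub_ne_zero.mpr (Ne.symm hx1)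
  have hy1' : (1 : F) - y ≠ 0 := sub_ne_zero.mpr (Ne.symm hy1)
  have h1 : y / x ≠ 0 ∧ y / x ≠ 1 :=
    ⟨div_ne_zero hy0 hx0, fun h => hxy ((div_eq_one_iff_eq hx0).mp h).symm⟩
  have h2 : (1 - x) / (1 - y) ≠ 0 ∧ (1 - x) / (1 - y) ≠ 1 :=
    ⟨div_ne_zero hx1' hy1', fun h => hxy (by
      have := (div_eq_one_iff_eq hy1').mp h
      linear_combination -this)⟩
  have h3 : y * (1 - x) / (x * (1 - y)) ≠ 0 ∧ y * (1 - x) / (x * (1 - y)) ≠ 1 :=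
    ⟨div_ne_zero (mul_ne_zero hy0 hx1') (mul_ne_zero hx0 hy1'), fun h => hxy (by
      have := (div_eq_one_iff_eq (mul_ne_zero hx0 hy1')).mp h
      linear_combination -this)⟩
  rw [br'_eq hx0 hx1, br'_eq hy0 hy1, br'_eq h1.1 h1.2, br'_eq h2.1 h2.2, br'_eq h3.1 h3.2]
  have mem : (FreeAbelianGroup.of ⟨x, hx0, hx1⟩ - FreeAbelianGroup.of ⟨y, hy0, hy1⟩
          + FreeAbelianGroup.of ⟨y / x, h1⟩
          + FreeAbelianGroup.of ⟨(1 - x) / (1 - y), h2⟩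
          - FreeAbelianGroup.of ⟨y * (1 - x) / (x * (1 - y)), h3⟩) ∈ fiveTermSet F :=
    ⟨x, y, ⟨hx0, hx1⟩, ⟨hy0, hy1⟩, hxy, h1, h2, h3, rfl⟩
  have h0 := (QuotientAddGroup.eq_zero_iff _).mpr (AddSubgroup.subset_closure mem)
  simpa [br, QuotientAddGroup.mk_sub, QuotientAddGroup.mk_add] using h0

lemma psi {F : Type*} [Field F] (x y : F) (hx0 : x ≠ 0) (hx1 : x ≠ 1)
    (hy0 : y ≠ 0) (hy1 : y ≠ 1) :
    br' x + br' (1 - x) = br' y + br' (1 - y) := by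
  rcases eq_or_ne x y with rfl | hxy
  · rfl
  have h1 := rel' x y hx0 hx1 hy0 hy1 hxy
  have h2 := rel' (1 - y) (1 - x) (sub_ne_zero.mpr (Ne.symm hy1))
      (fun h => hy0 (by linear_combination -h)) (sub_ne_zero.mpr (Ne.symm hx1))
      (fun h => hx0 (by linear_combination -h))
      (fun h => hxy (by linear_combination h))
  rw [show (1 - (1 - x) : F) = x from by ring, show (1 - (1 - y) : F) = y from by ring,
    show ((1 - x) * y / ((1 - y) * x) : F) = y * (1 - x) / (x * (1 - y)) from by ring] at h2
  have key : (br' x + br' (1 - x)) - (br' y + br' (1 - y)) =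
      (br' x - br' y + br' (y / x) + br' ((1 - x) / (1 - y))
        - br' (y * (1 - x) / (x * (1 - y))))
      - (br' (1 - y) - br' (1 - x) + br' ((1 - x) / (1 - y)) + br' (y / x)
        - br' (y * (1 - x) / (x * (1 - y)))) := by abel
  rw [h1, h2, sub_zero] at key
  exact sub_eq_zero.mp key

/-- Over a field of characteristic zero containing a square root `i` of `-1`,
`3({x} + {1-x}) = 0` in the pre-Bloch group `P(F)` for every
`x ∈ F** = F \ {0,1}`. -/
theorem three_cF_eq_zero (F : Type*) [Field F] [CharZero F]
    (i : F) (hi : i ^ 2 = -1) (x : F) (hx0 : x ≠ 0) (hx1 : x ≠ 1) :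
    3 • (br x hx0 hx1
        + br (1 - x) (sub_ne_zero.mpr (Ne.symm hx1)) (fun h => hx0 (sub_eq_self.mp h))) = 0 := by
  have two0 : (2 : F) ≠ 0 := two_ne_zero
  have hi0 : i ≠ 0 := by intro h; rw [h] at hi; norm_num at hi
  have hi1 : i ≠ 1 := by intro h; rw [h] at hi; norm_num at hi
  have hin1 : i ≠ -1 := by intro h; rw [h] at hi; norm_num at hi
  have hni0 : -i ≠ 0 := neg_ne_zero.mpr hi0
  have hni1 : -i ≠ 1 := by intro h; exact hin1 (by linear_combination -h)
  have h1mi0 : (1 : F) - i ≠ 0 := sub_ne_zero.mpr (Ne.symm hi1)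
  have h1mi1 : (1 : F) - i ≠ 1 := by intro h; exact hi0 (by linear_combination -h)
  have h1pi0 : (1 : F) + i ≠ 0 := by intro h; exact hin1 (by linear_combination h)
  have h1pi1 : (1 : F) + i ≠ 1 := by intro h; exact hi0 (by linear_combination h)
  have hu0 : (1 - i) / 2 ≠ 0 := div_ne_zero h1mi0 two0
  have hu1 : (1 - i) / 2 ≠ 1 := by
    intro h; rw [div_eq_iff two0] at h; exact hin1 (by linear_combination -h)
  have hv0 : (1 + i) / 2 ≠ 0 := div_ne_zero h1pi0 two0
  have hv1 : (1 + i) / 2 ≠ 1 := by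
    intro h; rw [div_eq_iff two0] at h; exact hi1 (by linear_combination h)
  have half0 : (1 / 2 : F) ≠ 0 := by norm_num
  have half1 : (1 / 2 : F) ≠ 1 := by norm_num
  have huv : (1 - i) / 2 ≠ (1 + i) / 2 := by
    intro h; rw [div_eq_div_iff two0 two0] at h; exact hi0 (by linear_combination -h / 4)
  have hi1pi : i ≠ 1 + i := by
    intro h; have h1 : (1 : F) = 0 := by linear_combination -h
    exact one_ne_zero h1
  -- value computations
  have hb2 : (1 : F) - (1 + i) / 2 ≠ 0 := by
    rw [show (1 - (1 + i) / 2 : F) = (1 - i) / 2 by ring]; exact hu0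
  have hb5 : (1 : F) - (1 - i) / 2 ≠ 0 := by
    rw [show (1 - (1 - i) / 2 : F) = (1 + i) / 2 by ring]; exact hv0
  have hb8 : (1 : F) - (1 + i) ≠ 0 := by
    rw [show (1 - (1 + i) : F) = -i by ring]; exact hni0
  have e1 : ((1 + i) / 2 / ((1 - i) / 2) : F) = i :=
    (div_eq_iff hu0).mpr (by linear_combination hi / 2)
  have e2 : ((1 - (1 - i) / 2) / (1 - (1 + i) / 2) : F) = i :=
    (div_eq_iff hb2).mpr (by linear_combination hi / 2)
  have e3 : ((1 + i) / 2 * (1 - (1 - i) / 2) / ((1 - i) / 2 * (1 - (1 + i) / 2)) : F) = -1 :=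
    (div_eq_iff (mul_ne_zero hu0 hb2)).mpr (by linear_combination hi / 2)
  have e4 : ((1 - i) / 2 / ((1 + i) / 2) : F) = -i :=
    (div_eq_iff hv0).mpr (by linear_combination hi / 2)
  have e5 : ((1 - (1 + i) / 2) / (1 - (1 - i) / 2) : F) = -i :=
    (div_eq_iff hb5).mpr (by linear_combination hi / 2)
  have e6 : ((1 - i) / 2 * (1 - (1 + i) / 2) / ((1 + i) / 2 * (1 - (1 - i) / 2)) : F) = -1 :=
    (div_eq_iff (mul_ne_zero hv0 hb5)).mpr (by linear_combination hi / 2)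
  have e7 : ((1 + i) / i : F) = 1 - i :=
    (div_eq_iff hi0).mpr (by linear_combination hi)
  have e8 : ((1 - i) / (1 - (1 + i)) : F) = 1 + i :=
    (div_eq_iff hb8).mpr (by linear_combination hi)
  have e9 : ((1 + i) * (1 - i) / (i * (1 - (1 + i))) : F) = 2 :=
    (div_eq_iff (mul_ne_zero hi0 hb8)).mpr (by linear_combination hi)
  have e10 : (i / (1 + i) : F) = (1 + i) / 2 :=
    (div_eq_iff h1pi0).mpr (by linear_combination -hi / 2)
  have e11 : ((1 - (1 + i)) / (1 - i) : F) = (1 - i) / 2 :=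
    (div_eq_iff h1mi0).mpr (by linear_combination -hi / 2)
  have e12 : (i * (1 - (1 + i)) / ((1 + i) * (1 - i)) : F) = 1 / 2 :=
    (div_eq_iff (mul_ne_zero h1pi0 h1mi0)).mpr (by linear_combination -hi / 2)
  -- the four "σ-type" five-term relations
  have s1a := rel' ((1 - i) / 2) ((1 + i) / 2) hu0 hu1 hv0 hv1 huv
  rw [e1, e2, e3] at s1a
  have s1b := rel' ((1 + i) / 2) ((1 - i) / 2) hv0 hv1 hu0 hu1 (Ne.symm huv)
  rw [e4, e5, e6] at s1b
  have s2a := rel' i (1 + i) hi0 hi1 h1pi0 h1pi1 hi1pi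
  rw [e7, e8, e9] at s2a
  have s2b := rel' (1 + i) i h1pi0 h1pi1 hi0 hi1 (Ne.symm hi1pi)
  rw [e10, e11, e12] at s2b
  -- the "ψ is constant" relations
  have p1 := psi i (1 / 2) hi0 hi1 half0 half1
  rw [show (1 - 1 / 2 : F) = 1 / 2 by norm_num] at p1
  have p2 := psi (-i) (1 / 2) hni0 hni1 half0 half1
  rw [show (1 - -i : F) = 1 + i by ring, show (1 - 1 / 2 : F) = 1 / 2 by norm_num] at p2
  have p3 := psi ((1 + i) / 2) (1 / 2) hv0 hv1 half0 half1
  rw [show (1 - (1 + i) / 2 : F) = (1 - i) / 2 by ring,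
    show (1 - 1 / 2 : F) = 1 / 2 by norm_num] at p3
  have p4 := psi (-1) (1 / 2) (by norm_num) (by norm_num) half0 half1
  rw [show (1 - (-1) : F) = 2 by norm_num, show (1 - 1 / 2 : F) = 1 / 2 by norm_num] at p4
  have q1 := sub_eq_zero.mpr p1
  have q2 := sub_eq_zero.mpr p2
  have q3 := sub_eq_zero.mpr p3
  have q4 := sub_eq_zero.mpr p4
  -- rewrite the goal via ψ(x) = ψ(1/2)
  rw [← br'_eq hx0 hx1,
    ← br'_eq (sub_ne_zero.mpr (Ne.symm hx1)) (fun h => hx0 (sub_eq_self.mp h))]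
  have hpx := psi x (1 / 2) hx0 hx1 half0 half1
  rw [show (1 - 1 / 2 : F) = 1 / 2 by norm_num] at hpx
  rw [hpx]
  have key : (3 : ℕ) • (br' ((1 : F) / 2) + br' (1 / 2)) =
      (br' ((1 - i) / 2) - br' ((1 + i) / 2) + br' i + br' i - br' (-1))
      + (br' ((1 + i) / 2) - br' ((1 - i) / 2) + br' (-i) + br' (-i) - br' (-1))
      + (2 : ℤ) • (br' i - br' (1 + i) + br' (1 - i) + br' (1 + i) - br' 2)
      + (2 : ℤ) • (br' (1 + i) - br' i + br' ((1 + i) / 2) + br' ((1 - i) / 2) - br' (1 / 2))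
      - (2 : ℤ) • (br' i + br' (1 - i) - (br' ((1 : F) / 2) + br' (1 / 2)))
      - (2 : ℤ) • (br' (-i) + br' (1 + i) - (br' ((1 : F) / 2) + br' (1 / 2)))
      - (2 : ℤ) • (br' ((1 + i) / 2) + br' ((1 - i) / 2) - (br' ((1 : F) / 2) + br' (1 / 2)))
      + (2 : ℤ) • (br' (-1) + br' 2 - (br' ((1 : F) / 2) + br' (1 / 2))) := by abel
  rw [s1a, s1b, s2a, s2b, q1, q2, q3, q4] at key
  simpa using key
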